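/- Let h>0, α,β∈(0,1], d≥1, let A be a real d×d matrix all of whose entries are nonnegative, and let γ: ℕ→ℝ^d satisfy γ(n)∈ℝ^d_≥ for all n∈ℕ. Then the semilinear sequential Caputo system is positive: for all x_a, x_0∈ℝ^d_≥, the unique solution X of the initial value problem (C_β(C_α X))(n) = A·X(n) + γ(n), X(0)=x_a, (C_α X)(0)=x_0 satisfies X(n)∈ℝ^d_≥ for every n∈ℕ. -/

import Mathlib

/-- `c γ m = Γ(γ+m)/(Γ(γ)·Γ(m+1))`. -/
noncomputable def cCoeff (γ : ℝ) (m : ℕ) : ℝ :=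
  Real.Gamma (γ + m) / (Real.Gamma γ * Real.Gamma (m + 1))

/-- Caputo `h`-difference of order `α ∈ (0,1]` of an `ℝ^d`-valued sequence. -/
noncomputable def caputo (h α : ℝ) {d : ℕ} (u : ℕ → Fin d → ℝ) (n : ℕ) : Fin d → ℝ :=
  if α < 1 then
    h ^ (1 - α) • ∑ k ∈ Finset.range (n + 1), cCoeff (1 - α) (n - k) • (h⁻¹ • (u (k + 1) - u k))
  else h⁻¹ • (u (n + 1) - u n)

/-- `X` solves the sequential Caputo initial value problem
`(C_β(C_α X))(n) = f(n, X(n))`, `X(0) = x_a`, `(C_α X)(0) = x_0`. -/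
noncomputable def IsSolIVP (h α β : ℝ) {d : ℕ} (f : ℕ → (Fin d → ℝ) → Fin d → ℝ)
    (xa x0 : Fin d → ℝ) (X : ℕ → Fin d → ℝ) : Prop :=
  (∀ n : ℕ, caputo h β (caputo h α X) n = f n (X n)) ∧ X 0 = xa ∧ caputo h α X 0 = x0

lemma cCoeff_pos {γ : ℝ} (hγ : 0 < γ) (m : ℕ) : 0 < cCoeff γ m := by
  unfold cCoeff
  have h1 : 0 < Real.Gamma (γ + m) := Real.Gamma_pos_of_pos (by positivity)
  have h2 : 0 < Real.Gamma γ := Real.Gamma_pos_of_pos hγ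
  have h3 : 0 < Real.Gamma ((m : ℝ) + 1) := Real.Gamma_pos_of_pos (by positivity)
  positivity

lemma cCoeff_zero {γ : ℝ} (hγ : 0 < γ) : cCoeff γ 0 = 1 := by
  unfold cCoeff
  have h2 : Real.Gamma γ ≠ 0 := ne_of_gt (Real.Gamma_pos_of_pos hγ)
  simp [Real.Gamma_one, div_self h2]

lemma cCoeff_succ {γ : ℝ} (hγ : 0 < γ) (m : ℕ) :
    cCoeff γ (m + 1) = cCoeff γ m * ((γ + m) / (m + 1)) := by
  unfold cCoeff
  have e1 : (γ + (m + 1 : ℕ) : ℝ) = (γ + m) + 1 := by push_cast; ring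
  have e2 : ((m + 1 : ℕ) + 1 : ℝ) = ((m : ℝ) + 1) + 1 := by push_cast; ring
  rw [e1, e2, Real.Gamma_add_one (by positivity), Real.Gamma_add_one (by positivity)]
  have h2 : Real.Gamma γ ≠ 0 := ne_of_gt (Real.Gamma_pos_of_pos hγ)
  have h3 : Real.Gamma ((m : ℝ) + 1) ≠ 0 := ne_of_gt (Real.Gamma_pos_of_pos (by positivity))
  have h4 : ((m : ℝ) + 1) ≠ 0 := by positivity
  field_simp

lemma cCoeff_anti {γ : ℝ} (h0 : 0 < γ) (h1 : γ ≤ 1) (m : ℕ) :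
    cCoeff γ (m + 1) ≤ cCoeff γ m := by
  rw [cCoeff_succ h0 m]
  have hpos := cCoeff_pos h0 m
  have hle : (γ + m) / (m + 1) ≤ 1 := by
    rw [div_le_one (by positivity)]; linarith
  nlinarith

lemma pos_step (h α : ℝ) (hh : 0 < h) (hα1 : 0 < α) (hα2 : α ≤ 1)
    {d : ℕ} (U : ℕ → Fin d → ℝ) (i : Fin d) (n : ℕ)
    (hu : ∀ k, k ≤ n → 0 ≤ U k i)
    (hc : 0 ≤ caputo h α U n i) : 0 ≤ U (n + 1) i := by
  unfold caputo at hc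
  rcases lt_or_ge α 1 with hlt | hge
  · rw [if_pos hlt] at hc
    set γ := 1 - α with hγdef
    have hγ0 : 0 < γ := by simp [hγdef]; linarith
    have hpow : 0 < h ^ (1 - α) := Real.rpow_pos_of_pos hh _
    simp only [Pi.smul_apply, Finset.sum_apply, smul_eq_mul, Pi.sub_apply] at hc
    have hc1 : 0 ≤ ∑ k ∈ Finset.range (n + 1),
        cCoeff γ (n - k) * (h⁻¹ * (U (k + 1) i - U k i)) :=
      (mul_nonneg_iff_of_pos_left hpow).mp hc
    have hc2 : 0 ≤ ∑ k ∈ Finset.range (n + 1),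
        cCoeff γ (n - k) * (U (k + 1) i - U k i) := by
      have he : ∑ k ∈ Finset.range (n + 1), cCoeff γ (n - k) * (h⁻¹ * (U (k + 1) i - U k i))
          = h⁻¹ * ∑ k ∈ Finset.range (n + 1), cCoeff γ (n - k) * (U (k + 1) i - U k i) := by
        rw [Finset.mul_sum]; exact Finset.sum_congr rfl fun k _ => by ring
      rw [he] at hc1
      exact (mul_nonneg_iff_of_pos_left (by positivity)).mp hc1
    -- Abel rearrangement
    have key : U (n + 1) i
        = (∑ k ∈ Finset.range (n + 1), cCoeff γ (n - k) * (U (k + 1) i - U k i))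
          + cCoeff γ n * U 0 i
          + ∑ k ∈ Finset.range n, (cCoeff γ (n - k - 1) - cCoeff γ (n - k)) * U (k + 1) i := by
      have e1 : ∑ k ∈ Finset.range (n + 1), cCoeff γ (n - k) * (U (k + 1) i - U k i)
          = (∑ k ∈ Finset.range (n + 1), cCoeff γ (n - k) * U (k + 1) i)
            - ∑ k ∈ Finset.range (n + 1), cCoeff γ (n - k) * U k i := by
        rw [← Finset.sum_sub_distrib]; exact Finset.sum_congr rfl fun k _ => by ring
      have e2 : ∑ k ∈ Finset.range (n + 1), cCoeff γ (n - k) * U (k + 1) i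
          = (∑ k ∈ Finset.range n, cCoeff γ (n - k) * U (k + 1) i) + U (n + 1) i := by
        rw [Finset.sum_range_succ, Nat.sub_self, cCoeff_zero hγ0, one_mul]
      have e3 : ∑ k ∈ Finset.range (n + 1), cCoeff γ (n - k) * U k i
          = (∑ k ∈ Finset.range n, cCoeff γ (n - (k + 1)) * U (k + 1) i)
            + cCoeff γ (n - 0) * U 0 i :=
        Finset.sum_range_succ' (fun k => cCoeff γ (n - k) * U k i) n
      have e4 : ∑ k ∈ Finset.range n, (cCoeff γ (n - k - 1) - cCoeff γ (n - k)) * U (k + 1) i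
          = (∑ k ∈ Finset.range n, cCoeff γ (n - (k + 1)) * U (k + 1) i)
            - ∑ k ∈ Finset.range n, cCoeff γ (n - k) * U (k + 1) i := by
        rw [← Finset.sum_sub_distrib]
        exact Finset.sum_congr rfl fun k _ => by
          have : n - k - 1 = n - (k + 1) := by omega
          rw [this]; ring
      rw [e1, e2, e3, e4, Nat.sub_zero]
      ring
    rw [key]
    have h2 : 0 ≤ cCoeff γ n * U 0 i :=
      mul_nonneg (le_of_lt (cCoeff_pos hγ0 n)) (hu 0 (Nat.zero_le n))
    have h3 : 0 ≤ ∑ k ∈ Finset.range n,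
        (cCoeff γ (n - k - 1) - cCoeff γ (n - k)) * U (k + 1) i := by
      apply Finset.sum_nonneg
      intro k hk
      have hk' := Finset.mem_range.mp hk
      have hnk : n - k = (n - k - 1) + 1 := by omega
      apply mul_nonneg
      · have := cCoeff_anti hγ0 (by simp [hγdef]; linarith) (n - k - 1)
        rw [← hnk] at this
        linarith
      · exact hu (k + 1) (by omega)
    linarith
  · rw [if_neg (not_lt.mpr hge)] at hc
    simp only [Pi.smul_apply, smul_eq_mul, Pi.sub_apply] at hc
    have : 0 ≤ U (n + 1) i - U n i := (mul_nonneg_iff_of_pos_left (by positivity)).mp hc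
    have := hu n le_rfl
    linarith

theorem semilinear_ivp_positive (h α β : ℝ) (hh : 0 < h)
    (hα1 : 0 < α) (hα2 : α ≤ 1) (hβ1 : 0 < β) (hβ2 : β ≤ 1)
    (d : ℕ) (hd : 1 ≤ d) (A : Matrix (Fin d) (Fin d) ℝ) (hA : ∀ i j, 0 ≤ A i j)
    (γ : ℕ → Fin d → ℝ) (hγ : ∀ n : ℕ, ∀ i, 0 ≤ γ n i)
    (xa x0 : Fin d → ℝ) (hxa : ∀ i, 0 ≤ xa i) (hx0 : ∀ i, 0 ≤ x0 i)
    (X : ℕ → Fin d → ℝ) (hX : IsSolIVP h α β (fun n x => A.mulVec x + γ n) xa x0 X) :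
    ∀ n : ℕ, ∀ i, 0 ≤ X n i := by
  obtain ⟨heq, hX0, hY0⟩ := hX
  set Y := caputo h α X with hYdef
  have main : ∀ n : ℕ, (∀ k, k ≤ n → ∀ i, 0 ≤ X k i) ∧ (∀ k, k ≤ n → ∀ i, 0 ≤ Y k i) := by
    intro n
    induction n with
    | zero =>
      constructor
      · intro k hk i; interval_cases k; rw [hX0]; exact hxa i
      · intro k hk i; interval_cases k; rw [hY0]; exact hx0 i
    | succ n ih =>
      obtain ⟨ihX, ihY⟩ := ih
      have hYsucc : ∀ i, 0 ≤ Y (n + 1) i := by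
        intro i
        apply pos_step h β hh hβ1 hβ2 Y i n (fun k hk => ihY k hk i)
        rw [heq n]
        have : 0 ≤ A.mulVec (X n) i := by
          rw [Matrix.mulVec, dotProduct]
          exact Finset.sum_nonneg fun j _ => mul_nonneg (hA i j) (ihX n le_rfl j)
        have := hγ n i
        simp only [Pi.add_apply]
        linarith
      have hXsucc : ∀ i, 0 ≤ X (n + 1) i := by
        intro i
        apply pos_step h α hh hα1 hα2 X i n (fun k hk => ihX k hk i)
        exact ihY n le_rfl i
      constructor
      · intro k hk i
        rcases Nat.lt_succ_iff_lt_or_eq.mp (Nat.lt_succ_of_le hk) with h' | h'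
        · exact ihX k (Nat.lt_succ_iff.mp h') i
        · subst h'; exact hXsucc i
      · intro k hk i
        rcases Nat.lt_succ_iff_lt_or_eq.mp (Nat.lt_succ_of_le hk) with h' | h'
        · exact ihY k (Nat.lt_succ_iff.mp h') i
        · subst h'; exact hYsucc i
  intro n i
  exact (main n).1 n le_rfl i
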